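/- Let A be a Hopf algebra, H a right A-comodule algebra with free coaction F (for each a ∈ A there are qᵢ, bᵢ ∈ H with Σᵢ qᵢ F(bᵢ) = 1 ⊗ a). Let D be a degree +1 right-covariant antiderivation and E a degree +1 right-covariant antiderivation, with associated maps ρ_D, χ_E : A → H characterized by D²(φ) = −Σ_k φ_k ρ_D(c_k) and E(φ) = −(−1)^{∂φ} Σ_k φ_k χ_E(c_k) for all homogeneous φ. Then the map ρ_{D+E} characterized by (D+E)²(φ) = −Σ_k φ_k ρ_{D+E}(c_k) satisfies ρ_{D+E}(a) = ρ_D(a) + D(χ_E(a)) + χ_E(a⁽¹⁾)χ_E(a⁽²⁾) for all a ∈ A. -/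

import Mathlib

open TensorProduct

set_option synthInstance.maxHeartbeats 400000
set_option maxHeartbeats 1000000

noncomputable section

variable {A H : Type*} [Ring A] [HopfAlgebra ℂ A] [Ring H] [Algebra ℂ H]

/-- The comodule axioms for a coaction `F : H → H ⊗ A`:
`(F ⊗ id)F = (id ⊗ Δ)F` and `(id ⊗ ε)F = id`. -/
def IsCoaction (F : H →ₐ[ℂ] H ⊗[ℂ] A) : Prop :=
  (∀ φ : H, LinearMap.rTensor A F.toLinearMap (F φ) =
      (TensorProduct.assoc ℂ H A A).symm
        (LinearMap.lTensor H (Coalgebra.comul (R := ℂ)) (F φ))) ∧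
  (∀ φ : H, TensorProduct.rid ℂ H
      (LinearMap.lTensor H (Coalgebra.counit (R := ℂ)) (F φ)) = φ)

/-- Freeness of the coaction: every `1 ⊗ a` is of the form `Σᵢ qᵢ F(bᵢ)`. -/
def IsFree (F : H →ₐ[ℂ] H ⊗[ℂ] A) : Prop :=
  ∀ a : A, ∃ (n : ℕ) (q b : Fin n → H),
    ∑ i, ((q i) ⊗ₜ[ℂ] (1 : A)) * F (b i) = (1 : H) ⊗ₜ[ℂ] a

/-- The Sweedler-type operator `φ ↦ Σ_k φ_k ρ(c_k)` where `F φ = Σ_k φ_k ⊗ c_k`. -/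
def sw (F : H →ₐ[ℂ] H ⊗[ℂ] A) (ρ : A →ₗ[ℂ] H) (φ : H) : H :=
  LinearMap.mul' ℂ H (LinearMap.lTensor H ρ (F φ))

/-- The right adjoint coaction `ad a = a⁽²⁾ ⊗ κ(a⁽¹⁾)a⁽³⁾`. -/
def adc : A →ₗ[ℂ] A ⊗[ℂ] A :=
  (LinearMap.lTensor A (LinearMap.mul' ℂ A)) ∘ₗ
  (TensorProduct.leftComm ℂ A A A).toLinearMap ∘ₗ
  (LinearMap.rTensor (A ⊗[ℂ] A) (HopfAlgebra.antipode (R := ℂ))) ∘ₗ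
  (LinearMap.lTensor A (Coalgebra.comul (R := ℂ))) ∘ₗ (Coalgebra.comul (R := ℂ))

/-- Auxiliary: `φ ⊗ a ↦ φ · ρ(a)`. -/
def Gm (ρ : A →ₗ[ℂ] H) : H ⊗[ℂ] A →ₗ[ℂ] H :=
  LinearMap.mul' ℂ H ∘ₗ LinearMap.lTensor H ρ

lemma Gm_tmul (ρ : A →ₗ[ℂ] H) (h : H) (a : A) : Gm ρ (h ⊗ₜ[ℂ] a) = h * ρ a := by
  simp [Gm]

lemma sw_eq_Gm (F : H →ₐ[ℂ] H ⊗[ℂ] A) (ρ : A →ₗ[ℂ] H) (φ : H) :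
    sw F ρ φ = Gm ρ (F φ) := rfl

lemma Gm_add (ρ ρ' : A →ₗ[ℂ] H) (x : H ⊗[ℂ] A) :
    Gm (ρ + ρ') x = Gm ρ x + Gm ρ' x := by
  simp [Gm, LinearMap.lTensor_add]

lemma Gm_mul_left (ρ : A →ₗ[ℂ] H) (q : H) (x : H ⊗[ℂ] A) :
    Gm ρ ((q ⊗ₜ[ℂ] (1 : A)) * x) = q * Gm ρ x := by
  induction x using TensorProduct.induction_on with
  | zero => simp
  | tmul h a =>
      simp [Gm_tmul, Algebra.TensorProduct.tmul_mul_tmul, mul_assoc]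
  | add x y hx hy => simp only [mul_add, map_add, hx, hy]

lemma Gm_free_eq (F : H →ₐ[ℂ] H ⊗[ℂ] A) (hfree : IsFree F) (ρ ρ' : A →ₗ[ℂ] H)
    (h : ∀ φ : H, Gm ρ (F φ) = Gm ρ' (F φ)) (a : A) : ρ a = ρ' a := by
  obtain ⟨n, q, b, hb⟩ := hfree a
  have key : ∀ σ : A →ₗ[ℂ] H, σ a = ∑ i, q i * Gm σ (F (b i)) := by
    intro σ
    have : Gm σ ((1 : H) ⊗ₜ[ℂ] a) = σ a := by simp [Gm_tmul]
    rw [← this, ← hb, map_sum]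
    exact Finset.sum_congr rfl fun i _ => Gm_mul_left σ (q i) (F (b i))
  rw [key ρ, key ρ']
  exact Finset.sum_congr rfl fun i _ => by rw [h (b i)]

lemma leib_all (𝒜 : ℤ → Submodule ℂ H) [GradedAlgebra 𝒜] (D : H →ₗ[ℂ] H)
    (hDleib : ∀ (n m : ℤ) (φ ψ : H), φ ∈ 𝒜 n → ψ ∈ 𝒜 m →
      D (φ * ψ) = D φ * ψ + ((-1 : ℂ) ^ n) • (φ * D ψ))
    (n : ℤ) (φ : H) (hφ : φ ∈ 𝒜 n) (ψ : H) :
    D (φ * ψ) = D φ * ψ + ((-1 : ℂ) ^ n) • (φ * D ψ) := by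
  refine DirectSum.Decomposition.inductionOn 𝒜
    (motive := fun ψ => D (φ * ψ) = D φ * ψ + ((-1 : ℂ) ^ n) • (φ * D ψ)) ?_ ?_ ?_ ψ
  · simp
  · intro i m
    exact hDleib n i φ m hφ m.2
  · intro x y hx hy
    simp only [mul_add, map_add, hx, hy, smul_add]
    abel

/-!  STATEMENT 9: the curvature-type map of `D + E` is
`ρ_{D+E}(a) = ρ_D(a) + D(χ_E(a)) + χ_E(a⁽¹⁾)χ_E(a⁽²⁾)`. -/

theorem curvature_of_shifted_preconnection
    (𝒜 : ℤ → Submodule ℂ H) [GradedAlgebra 𝒜]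
    (F : H →ₐ[ℂ] H ⊗[ℂ] A) (hco : IsCoaction F) (hfree : IsFree F)
    (hFgr : ∀ (n : ℤ), ∀ φ ∈ 𝒜 n,
      F φ ∈ LinearMap.range (LinearMap.rTensor A (𝒜 n).subtype))
    (D E : H →ₗ[ℂ] H)
    (hDdeg : ∀ (n : ℤ), ∀ φ ∈ 𝒜 n, D φ ∈ 𝒜 (n + 1))
    (hEdeg : ∀ (n : ℤ), ∀ φ ∈ 𝒜 n, E φ ∈ 𝒜 (n + 1))
    (hDcov : ∀ φ : H, F (D φ) = LinearMap.rTensor A D (F φ))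
    (hEcov : ∀ φ : H, F (E φ) = LinearMap.rTensor A E (F φ))
    (hDleib : ∀ (n m : ℤ) (φ ψ : H), φ ∈ 𝒜 n → ψ ∈ 𝒜 m →
      D (φ * ψ) = D φ * ψ + ((-1 : ℂ) ^ n) • (φ * D ψ))
    (hEleib : ∀ (n m : ℤ) (φ ψ : H), φ ∈ 𝒜 n → ψ ∈ 𝒜 m →
      E (φ * ψ) = E φ * ψ + ((-1 : ℂ) ^ n) • (φ * E ψ))
    (ρD χE ρDE : A →ₗ[ℂ] H)
    (hρD : ∀ φ : H, D (D φ) = - sw F ρD φ)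
    (hχE : ∀ (n : ℤ), ∀ φ ∈ 𝒜 n, E φ = - (((-1 : ℂ) ^ n) • sw F χE φ))
    (hρDE : ∀ φ : H, (D + E) ((D + E) φ) = - sw F ρDE φ) :
    ∀ a : A, ρDE a = ρD a + D (χE a) +
      LinearMap.mul' ℂ H (TensorProduct.map χE χE (Coalgebra.comul (R := ℂ) a)) := by
  set ρ₂ : A →ₗ[ℂ] H :=
    LinearMap.mul' ℂ H ∘ₗ (TensorProduct.map χE χE) ∘ₗ (Coalgebra.comul (R := ℂ)) with hρ₂
  set ρ' : A →ₗ[ℂ] H := ρD + (D ∘ₗ χE) + ρ₂ with hρ'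
  have sign : ∀ n : ℤ, ((-1 : ℂ) ^ n) * ((-1 : ℂ) ^ n) = 1 := by
    intro n; rw [← mul_zpow]; norm_num
  -- Claim A: for homogeneous φ, D(Eφ) + E(Dφ) = - Gm (D ∘ χE) (F φ)
  have claimA : ∀ (n : ℤ) (φ : H), φ ∈ 𝒜 n →
      D (E φ) + E (D φ) = - Gm (D ∘ₗ χE) (F φ) := by
    intro n φ hφ
    obtain ⟨t, ht⟩ := hFgr n φ hφ
    have key1 : ∀ t : (𝒜 n) ⊗[ℂ] A,
        D (Gm χE (LinearMap.rTensor A (𝒜 n).subtype t)) =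
        Gm χE (LinearMap.rTensor A D (LinearMap.rTensor A (𝒜 n).subtype t)) +
          ((-1 : ℂ) ^ n) • Gm (D ∘ₗ χE) (LinearMap.rTensor A (𝒜 n).subtype t) := by
      intro t
      induction t using TensorProduct.induction_on with
      | zero => simp
      | tmul h a =>
          simp only [LinearMap.rTensor_tmul, Submodule.coe_subtype, Gm_tmul,
            LinearMap.coe_comp, Function.comp_apply]
          exact leib_all 𝒜 D hDleib n (h : H) h.2 (χE a)
      | add x y hx hy =>
          simp only [map_add, hx, hy, smul_add]
          abel
    have hE : E φ = - (((-1 : ℂ) ^ n) • Gm χE (F φ)) := hχE n φ hφ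
    have hED : E (D φ) = ((-1 : ℂ) ^ n) • Gm χE (LinearMap.rTensor A D (F φ)) := by
      have := hχE (n + 1) (D φ) (hDdeg n φ hφ)
      rw [this, sw_eq_Gm, hDcov φ, zpow_add_one₀ (by norm_num : (-1 : ℂ) ≠ 0)]
      simp [smul_smul]
    have key1' := key1 t
    rw [ht] at key1'
    rw [hE, hED, map_neg, map_smul, key1']
    simp only [smul_add, neg_add, smul_smul, sign n, one_smul]
    abel
  -- Claim B: for homogeneous φ, E(Eφ) = - Gm ρ₂ (F φ)
  have claimB : ∀ (n : ℤ) (φ : H), φ ∈ 𝒜 n →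
      E (E φ) = - Gm ρ₂ (F φ) := by
    intro n φ hφ
    obtain ⟨t, ht⟩ := hFgr n φ hφ
    have hEE : E (E φ) = ((-1 : ℂ) ^ n) • Gm χE (LinearMap.rTensor A E (F φ)) := by
      have := hχE (n + 1) (E φ) (hEdeg n φ hφ)
      rw [this, sw_eq_Gm, hEcov φ, zpow_add_one₀ (by norm_num : (-1 : ℂ) ≠ 0)]
      simp [smul_smul]
    have key2 : ∀ t : (𝒜 n) ⊗[ℂ] A,
        Gm χE (LinearMap.rTensor A E (LinearMap.rTensor A (𝒜 n).subtype t)) =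
        - (((-1 : ℂ) ^ n) •
          Gm χE (LinearMap.rTensor A ((Gm χE) ∘ₗ F.toLinearMap)
            (LinearMap.rTensor A (𝒜 n).subtype t))) := by
      intro t
      induction t using TensorProduct.induction_on with
      | zero => simp
      | tmul h a =>
          simp only [LinearMap.rTensor_tmul, Submodule.coe_subtype, Gm_tmul,
            LinearMap.coe_comp, Function.comp_apply, AlgHom.toLinearMap_apply]
          rw [hχE n (h : H) h.2, sw_eq_Gm]
          simp [smul_mul_assoc]
      | add x y hx hy =>
          simp only [map_add, hx, hy, smul_add, neg_add]
    have key3 : Gm χE (LinearMap.rTensor A ((Gm χE) ∘ₗ F.toLinearMap) (F φ)) =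
        Gm ρ₂ (F φ) := by
      rw [LinearMap.rTensor_comp, LinearMap.comp_apply, hco.1 φ]
      generalize F φ = x
      induction x using TensorProduct.induction_on with
      | zero => simp
      | tmul h a =>
          simp only [LinearMap.lTensor_tmul]
          have : ∀ u : A ⊗[ℂ] A,
              Gm χE (LinearMap.rTensor A (Gm χE)
                ((TensorProduct.assoc ℂ H A A).symm (h ⊗ₜ[ℂ] u))) =
              h * LinearMap.mul' ℂ H (TensorProduct.map χE χE u) := by
            intro u
            induction u using TensorProduct.induction_on with
            | zero => simp
            | tmul a₁ a₂ =>
                simp only [TensorProduct.assoc_symm_tmul, LinearMap.rTensor_tmul,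
                  Gm_tmul, TensorProduct.map_tmul, LinearMap.mul'_apply, mul_assoc]
            | add u v hu hv =>
                simp only [TensorProduct.tmul_add, map_add, hu, hv, mul_add]
          rw [this (Coalgebra.comul (R := ℂ) a)]
          simp [hρ₂, Gm_tmul]
      | add x y hx hy => simp only [map_add, hx, hy, mul_add]
    have key2' := key2 t
    rw [ht] at key2'
    rw [hEE, key2', key3]
    simp [smul_smul, sign n]
  -- main identity via freeness
  have main : ∀ φ : H, Gm ρDE (F φ) = Gm ρ' (F φ) := by
    intro φ
    refine DirectSum.Decomposition.inductionOn 𝒜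
      (motive := fun φ => Gm ρDE (F φ) = Gm ρ' (F φ)) ?_ ?_ ?_ φ
    · simp
    · intro i m
      have h1 : Gm ρDE (F (m : H)) = - ((D + E) ((D + E) (m : H))) := by
        rw [hρDE (m : H), sw_eq_Gm, neg_neg]
      have h2 : (D + E) ((D + E) (m : H)) =
          D (D (m : H)) + (D (E (m : H)) + E (D (m : H))) + E (E (m : H)) := by
        simp only [LinearMap.add_apply, map_add]
        abel
      rw [h1, h2, hρD (m : H), sw_eq_Gm, claimA i (m : H) m.2, claimB i (m : H) m.2,
        hρ', Gm_add, Gm_add]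
      abel
    · intro x y hx hy
      simp only [map_add, hx, hy]
  intro a
  have := Gm_free_eq F hfree ρDE ρ' main a
  rw [this, hρ']
  simp [hρ₂]
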